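/- Let ψ be a transition map that is a ρ-contraction in its first argument (0 ≤ ρ < 1), let π be a probability measure on ℝ^d with finite first moment, let f : ℝ^d → ℝ be 1-Lipschitz, and let θ_k = ψ_ℓ(θ_{k-ℓ}, w) for some fixed driving inputs w. Define f̄_ℓ(w) = ∫ f(ψ_ℓ(x, w)) dπ(x). Then |f̄_ℓ(w) - f(θ_k)| ≤ ρ^ℓ (‖θ_{k-ℓ}‖ + ∫‖θ‖ dπ(θ)). -/

import Mathlib

open MeasureTheory

/-- The `ℓ`-fold iterated composition of a transition map `ψ` with a list of driving inputs. -/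
def iterMap {E U : Type*} (ψ : E → U → E) : List U → E → E
  | [], θ => θ
  | u :: us, θ => iterMap ψ us (ψ θ u)

lemma iterMap_contract {E U : Type*} [NormedAddCommGroup E]
    (ψ : E → U → E) (ρ : ℝ) (hρ0 : 0 ≤ ρ)
    (hcontr : ∀ θ θ' u, ‖ψ θ u - ψ θ' u‖ ≤ ρ * ‖θ - θ'‖) :
    ∀ (w : List U) (θ θ' : E),
      ‖iterMap ψ w θ - iterMap ψ w θ'‖ ≤ ρ ^ w.length * ‖θ - θ'‖ := by
  intro w
  induction w with
  | nil => intro θ θ'; simp [iterMap]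
  | cons u us ih =>
    intro θ θ'
    calc ‖iterMap ψ us (ψ θ u) - iterMap ψ us (ψ θ' u)‖
        ≤ ρ ^ us.length * ‖ψ θ u - ψ θ' u‖ := ih _ _
      _ ≤ ρ ^ us.length * (ρ * ‖θ - θ'‖) := by
          exact mul_le_mul_of_nonneg_left (hcontr θ θ' u) (pow_nonneg hρ0 _)
      _ = ρ ^ (u :: us).length * ‖θ - θ'‖ := by simp [List.length_cons, pow_succ]; ring

/-- with `θ_k = ψ_ℓ(θ_{k-ℓ}, w)` and `f̄_ℓ(w) = ∫ f(ψ_ℓ(x,w)) dπ(x)`,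
`|f̄_ℓ(w) - f(θ_k)| ≤ ρ^ℓ (‖θ_{k-ℓ}‖ + ∫‖θ‖ dπ(θ))`. -/
theorem coupling_error_bound (d : ℕ)
    (ψ : EuclideanSpace ℝ (Fin d) → (Fin d → Set.Icc (0 : ℝ) 1) → EuclideanSpace ℝ (Fin d))
    (ρ : ℝ) (hρ0 : 0 ≤ ρ) (hρ1 : ρ < 1)
    (hcontr : ∀ θ θ' u, ‖ψ θ u - ψ θ' u‖ ≤ ρ * ‖θ - θ'‖)
    (π : Measure (EuclideanSpace ℝ (Fin d))) [IsProbabilityMeasure π]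
    (hmom : Integrable (fun θ : EuclideanSpace ℝ (Fin d) => ‖θ‖) π)
    (f : EuclideanSpace ℝ (Fin d) → ℝ) (hf : LipschitzWith 1 f)
    (ℓ : ℕ) (w : List (Fin d → Set.Icc (0 : ℝ) 1)) (hw : w.length = ℓ)
    (θprev θk : EuclideanSpace ℝ (Fin d)) (hθk : θk = iterMap ψ w θprev) :
    |(∫ x, f (iterMap ψ w x) ∂π) - f θk|
      ≤ ρ ^ ℓ * (‖θprev‖ + ∫ θ, ‖θ‖ ∂π) := by
  subst hθk hw
  set g : EuclideanSpace ℝ (Fin d) → ℝ := fun x => f (iterMap ψ w x) with hg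
  have hK : (0:ℝ) ≤ ρ ^ w.length := pow_nonneg hρ0 _
  have hglip : ∀ x y, |g x - g y| ≤ ρ ^ w.length * ‖x - y‖ := by
    intro x y
    have h1 : |g x - g y| ≤ ‖iterMap ψ w x - iterMap ψ w y‖ := by
      have := hf.dist_le_mul (iterMap ψ w x) (iterMap ψ w y)
      simpa [Real.dist_eq, dist_eq_norm] using this
    exact h1.trans (iterMap_contract ψ ρ hρ0 hcontr w x y)
  have hglipW : LipschitzWith (⟨ρ ^ w.length, hK⟩ : NNReal) g := by
    apply LipschitzWith.of_dist_le_mul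
    intro x y
    rw [Real.dist_eq, dist_eq_norm]; exact hglip x y
  have hgint : Integrable g π := by
    apply Integrable.mono' (g := fun x => |g θprev| + ρ ^ w.length * (‖x‖ + ‖θprev‖))
    · exact (integrable_const _).add (((hmom.add (integrable_const _)).const_mul _))
    · exact hglipW.continuous.aestronglyMeasurable
    · filter_upwards with x
      have := hglip x θprev
      have hxy : ‖x - θprev‖ ≤ ‖x‖ + ‖θprev‖ := norm_sub_le _ _
      calc ‖g x‖ ≤ |g θprev| + |g x - g θprev| := by
            rw [Real.norm_eq_abs]
            have := abs_sub_abs_le_abs_sub (g x) (g θprev)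
            linarith [abs_sub_comm (g x) (g θprev), abs_abs (g x)]
        _ ≤ |g θprev| + ρ ^ w.length * (‖x‖ + ‖θprev‖) := by
            have := (hglip x θprev).trans (mul_le_mul_of_nonneg_left hxy hK)
            linarith
  have key : |(∫ x, g x ∂π) - g θprev| ≤ ρ ^ w.length * (‖θprev‖ + ∫ θ, ‖θ‖ ∂π) := by
    have h1 : (∫ x, g x ∂π) - g θprev = ∫ x, (g x - g θprev) ∂π := by
      rw [integral_sub hgint (integrable_const _), integral_const]
      simp
    rw [h1]
    have h2 : |∫ x, (g x - g θprev) ∂π| ≤ ∫ x, |g x - g θprev| ∂π := by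
      simpa [Real.norm_eq_abs] using
        norm_integral_le_integral_norm (μ := π) (f := fun x => g x - g θprev)
    refine h2.trans ?_
    have h3 : ∫ x, |g x - g θprev| ∂π
        ≤ ∫ x, ρ ^ w.length * (‖θprev‖ + ‖x‖) ∂π := by
      apply integral_mono_of_nonneg
      · filter_upwards with x; positivity
      · exact ((integrable_const _).add hmom).const_mul _
      · filter_upwards with x
        have hxy : ‖x - θprev‖ ≤ ‖θprev‖ + ‖x‖ := by
          have := norm_sub_le x θprev; linarith
        exact (hglip x θprev).trans (mul_le_mul_of_nonneg_left hxy hK)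
    refine h3.trans ?_
    rw [integral_const_mul, integral_add (integrable_const _) hmom, integral_const]
    simp
  simpa using key
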